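/- For a jointly convex generalized Nash equilibrium problem, every solution of VI(C, F) with C the joint convex strategy set and F(Θ) = (∇_{Θ_i} b_i(Θ))_i is a generalized Nash equilibrium. -/

import Mathlib

open scoped RealInnerProductSpace

/-- Gradient inequality: if `f` is convex on `S`, differentiable, `x y ∈ S`,
and `⟪y - x, ∇f x⟫ ≥ 0`, then `f x ≤ f y`. -/
lemma aux_grad_ineq {E : Type*} [NormedAddCommGroup E] [InnerProductSpace ℝ E] [CompleteSpace E]
    {S : Set E} {f : E → ℝ} (hconv : ConvexOn ℝ S f)
    (hdiff : Differentiable ℝ f) {x y : E} (hx : x ∈ S) (hy : y ∈ S)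
    (hip : 0 ≤ ⟪y - x, gradient f x⟫) : f x ≤ f y := by
  -- consider g t = f (x + t • (y - x)) on [0,1]
  set g : ℝ → ℝ := fun t => f (x + t • (y - x)) with hg
  have hgx0 : x + (0 : ℝ) • (y - x) = x := by simp
  have hmem : ∀ t ∈ Set.Icc (0 : ℝ) 1, x + t • (y - x) ∈ S := by
    intro t ht
    have := hconv.1 hx hy (by linarith [ht.1, ht.2] : (0:ℝ) ≤ 1 - t) ht.1 (by ring)
    convert this using 1
    module
  have hgconv : ConvexOn ℝ (Set.Icc (0 : ℝ) 1) g := by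
    constructor
    · exact convex_Icc 0 1
    · intro s hs t ht a c ha hc hac
      have h1 := hconv.2 (hmem s hs) (hmem t ht) ha hc hac
      have hc1 : c = 1 - a := by linarith
      subst hc1
      have he : a • (x + s • (y - x)) + (1 - a) • (x + t • (y - x))
          = x + (a * s + (1 - a) * t) • (y - x) := by module
      rw [he] at h1
      simpa [hg, smul_eq_mul] using h1
  -- derivative of g at 0
  have hderiv : HasDerivAt g ⟪y - x, gradient f x⟫ 0 := by
    have h1 : HasDerivAt (fun t : ℝ => x + t • (y - x)) (y - x) 0 := by
      simpa using ((hasDerivAt_id (0:ℝ)).smul_const (y - x)).const_add x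
    have h2 : HasFDerivAt f (fderiv ℝ f x) x := (hdiff x).hasFDerivAt
    have h2' : HasFDerivAt f (fderiv ℝ f x) (x + (0:ℝ) • (y - x)) := by
      rwa [hgx0]
    have := h2'.comp_hasDerivAt 0 h1
    have heq : fderiv ℝ f x (y - x) = ⟪y - x, gradient f x⟫ := by
      rw [real_inner_comm]
      rw [show gradient f x = (InnerProductSpace.toDual ℝ E).symm (fderiv ℝ f x) from rfl]
      rw [InnerProductSpace.toDual_symm_apply]
    rwa [heq] at this
  by_cases hxy : x = y
  · simp [hxy]
  -- slope inequality
  have h01 : (0:ℝ) < 1 := one_pos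
  have hslope := hgconv.le_slope_of_hasDerivAt (by simp) (by simp) h01 hderiv
  have : slope g 0 1 = g 1 - g 0 := by simp [slope_def_field]
  rw [this] at hslope
  have hg0 : g 0 = f x := by simp [hg]
  have hg1 : g 1 = f y := by simp [hg]
  rw [hg0, hg1] at hslope
  linarith

/-- For a jointly convex GNEP, every solution of `VI(C, F)` with
`F(Θ) = (∇_{Θ_i} b_i(Θ))_i` is a generalized Nash equilibrium. -/
theorem stmt15 {ι : Type} [Fintype ι] [DecidableEq ι] (n : ι → ℕ)
    (C : Set (∀ i, EuclideanSpace ℝ (Fin (n i))))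
    (hCcl : IsClosed C) (hCconv : Convex ℝ C)
    (b : ι → (∀ i, EuclideanSpace ℝ (Fin (n i))) → ℝ)
    (hbdiff : ∀ i, ContDiff ℝ 1 (b i))
    (hbconv : ∀ i Θ, ConvexOn ℝ {θ | Function.update Θ i θ ∈ C}
      (fun θ => b i (Function.update Θ i θ)))
    (Θstar : ∀ i, EuclideanSpace ℝ (Fin (n i))) (hmem : Θstar ∈ C)
    (hVI : ∀ Θ ∈ C,
      0 ≤ ∑ i, ⟪Θ i - Θstar i,
        gradient (fun θ => b i (Function.update Θstar i θ)) (Θstar i)⟫) :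
    ∀ (i : ι) (θ : EuclideanSpace ℝ (Fin (n i))), Function.update Θstar i θ ∈ C →
      b i Θstar ≤ b i (Function.update Θstar i θ) := by
  intro i θ hθ
  set f : EuclideanSpace ℝ (Fin (n i)) → ℝ := fun θ' => b i (Function.update Θstar i θ') with hf
  have hfdiff : Differentiable ℝ f := by
    intro θ'
    exact DifferentiableAt.comp θ'
      (((hbdiff i).differentiable one_ne_zero) (Function.update Θstar i θ'))
      (hasFDerivAt_update Θstar θ').differentiableAt
  -- the VI reduces to a single term
  have hsum := hVI (Function.update Θstar i θ) hθ
  have hred : ∑ j, ⟪Function.update Θstar i θ j - Θstar j,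
      gradient (fun θ' => b j (Function.update Θstar j θ')) (Θstar j)⟫
      = ⟪θ - Θstar i, gradient f (Θstar i)⟫ := by
    rw [Finset.sum_eq_single i]
    · simp [hf]
    · intro j _ hj
      simp [Function.update_of_ne hj]
    · intro h; exact absurd (Finset.mem_univ i) h
  rw [hred] at hsum
  have hxS : Θstar i ∈ {θ' | Function.update Θstar i θ' ∈ C} := by
    simpa [Function.update_eq_self] using hmem
  have hconv := hbconv i Θstar
  have := aux_grad_ineq hconv hfdiff hxS hθ hsum
  simpa [hf, Function.update_eq_self] using this
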